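/- Let n ≥ 1, ξ : ℕ^n → ℂ and v ∈ ℂ^n, and define the quadratic expression Q(ξ,v) = Σ_{α∈ℕ^n} ( |Σ_{j : α_j ≥ 1} √(α_j) ξ_{α−c_j} v_j|² + Σ_{j=1}^n (|α|+n) |ξ_α|² |v_j|² ). Then Σ_{α∈ℕ^n} Σ_j (|α|+n)|ξ_α|²|v_j|² ≤ Q(ξ,v) ≤ 2 Σ_{α∈ℕ^n} Σ_j (|α|+n)|ξ_α|²|v_j|². (This is the two-sided estimate for the curvature quadratic form of the model Bergman bundle.) -/

import Mathlib

open Finset ENNReal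

/-- **two-sided estimate for the model Bergman curvature quadratic form.**
Let `n ≥ 1`, `ξ : ℕⁿ → ℂ`, `v ∈ ℂⁿ`, and
`Q(ξ,v) = Σ_α ( |Σ_{j : α_j ≥ 1} √(α_j) ξ_{α-c_j} v_j|² + Σ_j (|α|+n)|ξ_α|²|v_j|² )`.
Then `Σ_α Σ_j (|α|+n)|ξ_α|²|v_j|² ≤ Q(ξ,v) ≤ 2 Σ_α Σ_j (|α|+n)|ξ_α|²|v_j|²`
(all sums possibly infinite). -/
theorem curvature_two_sided_bound (n : ℕ) (hn : 1 ≤ n) (ξ : (Fin n → ℕ) → ℂ) (v : Fin n → ℂ) :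
    (∑' α : Fin n → ℕ, ∑ j : Fin n,
        (((∑ i, α i) + n : ℕ) : ℝ≥0∞) * (‖ξ α‖₊ : ℝ≥0∞) ^ 2 * (‖v j‖₊ : ℝ≥0∞) ^ 2) ≤
      (∑' α : Fin n → ℕ,
        ((‖∑ j ∈ Finset.univ.filter (fun j : Fin n => 1 ≤ α j),
            (Real.sqrt (α j) : ℂ) * ξ (fun i => α i - if i = j then 1 else 0) * v j‖₊ :
          ℝ≥0∞) ^ 2 +
          ∑ j : Fin n,
            (((∑ i, α i) + n : ℕ) : ℝ≥0∞) * (‖ξ α‖₊ : ℝ≥0∞) ^ 2 * (‖v j‖₊ : ℝ≥0∞) ^ 2)) ∧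
    (∑' α : Fin n → ℕ,
        ((‖∑ j ∈ Finset.univ.filter (fun j : Fin n => 1 ≤ α j),
            (Real.sqrt (α j) : ℂ) * ξ (fun i => α i - if i = j then 1 else 0) * v j‖₊ :
          ℝ≥0∞) ^ 2 +
          ∑ j : Fin n,
            (((∑ i, α i) + n : ℕ) : ℝ≥0∞) * (‖ξ α‖₊ : ℝ≥0∞) ^ 2 * (‖v j‖₊ : ℝ≥0∞) ^ 2)) ≤
      2 * ∑' α : Fin n → ℕ, ∑ j : Fin n,
        (((∑ i, α i) + n : ℕ) : ℝ≥0∞) * (‖ξ α‖₊ : ℝ≥0∞) ^ 2 * (‖v j‖₊ : ℝ≥0∞) ^ 2 := by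
  -- notation
  set S : ℝ≥0∞ := ∑' α : Fin n → ℕ, ∑ j : Fin n,
      (((∑ i, α i) + n : ℕ) : ℝ≥0∞) * (‖ξ α‖₊ : ℝ≥0∞) ^ 2 * (‖v j‖₊ : ℝ≥0∞) ^ 2 with hS
  have key : (∑' α : Fin n → ℕ,
      ((‖∑ j ∈ Finset.univ.filter (fun j : Fin n => 1 ≤ α j),
          (Real.sqrt (α j) : ℂ) * ξ (fun i => α i - if i = j then 1 else 0) * v j‖₊ :
        ℝ≥0∞) ^ 2)) ≤ S := by
    -- Cauchy–Schwarz pointwise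
    have cauchy : ∀ α : Fin n → ℕ,
        ((‖∑ j ∈ Finset.univ.filter (fun j : Fin n => 1 ≤ α j),
            (Real.sqrt (α j) : ℂ) * ξ (fun i => α i - if i = j then 1 else 0) * v j‖₊ :
          ℝ≥0∞) ^ 2) ≤
        (∑ j ∈ Finset.univ.filter (fun j : Fin n => 1 ≤ α j),
            ((α j : ℝ≥0∞) * (‖ξ (fun i => α i - if i = j then 1 else 0)‖₊ : ℝ≥0∞) ^ 2)) *
          ∑ k : Fin n, (‖v k‖₊ : ℝ≥0∞) ^ 2 := by
      intro α
      have hsq : ∀ j ∈ Finset.univ.filter (fun j : Fin n => 1 ≤ α j),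
          ‖(Real.sqrt (α j) : ℂ) * ξ (fun i => α i - if i = j then 1 else 0) * v j‖₊ ^ 2
            = ((α j : NNReal) * ‖ξ (fun i => α i - if i = j then 1 else 0)‖₊ ^ 2) * ‖v j‖₊ ^ 2 := by
        intro j _
        apply NNReal.coe_injective
        push_cast
        simp only [norm_mul, Complex.norm_real, Real.norm_eq_abs,
          abs_of_nonneg (Real.sqrt_nonneg _)]
        rw [mul_pow, mul_pow, Real.sq_sqrt (by positivity)]
        try ring
      have h1 : ‖∑ j ∈ Finset.univ.filter (fun j : Fin n => 1 ≤ α j),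
            (Real.sqrt (α j) : ℂ) * ξ (fun i => α i - if i = j then 1 else 0) * v j‖₊ ^ 2 ≤
          (∑ j ∈ Finset.univ.filter (fun j : Fin n => 1 ≤ α j),
            ((α j : NNReal) * ‖ξ (fun i => α i - if i = j then 1 else 0)‖₊ ^ 2)) *
          ∑ k : Fin n, ‖v k‖₊ ^ 2 := by
        calc _ ≤ (∑ j ∈ Finset.univ.filter (fun j : Fin n => 1 ≤ α j),
              ‖(Real.sqrt (α j) : ℂ) * ξ (fun i => α i - if i = j then 1 else 0) * v j‖₊) ^ 2 :=
            pow_le_pow_left₀ (zero_le) (nnnorm_sum_le _ _) 2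
          _ ≤ (∑ j ∈ Finset.univ.filter (fun j : Fin n => 1 ≤ α j),
              ((α j : NNReal) * ‖ξ (fun i => α i - if i = j then 1 else 0)‖₊ ^ 2)) *
              ∑ j ∈ Finset.univ.filter (fun j : Fin n => 1 ≤ α j), ‖v j‖₊ ^ 2 :=
            Finset.sum_sq_le_sum_mul_sum_of_sq_eq_mul _
              (fun _ _ => zero_le) (fun _ _ => zero_le) hsq
          _ ≤ _ := by
            gcongr
            exact Finset.filter_subset _ _
      exact_mod_cast h1
    calc (∑' α : Fin n → ℕ,
        ((‖∑ j ∈ Finset.univ.filter (fun j : Fin n => 1 ≤ α j),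
            (Real.sqrt (α j) : ℂ) * ξ (fun i => α i - if i = j then 1 else 0) * v j‖₊ :
          ℝ≥0∞) ^ 2))
        ≤ ∑' α : Fin n → ℕ,
            (∑ j ∈ Finset.univ.filter (fun j : Fin n => 1 ≤ α j),
              ((α j : ℝ≥0∞) * (‖ξ (fun i => α i - if i = j then 1 else 0)‖₊ : ℝ≥0∞) ^ 2)) *
            ∑ k : Fin n, (‖v k‖₊ : ℝ≥0∞) ^ 2 := ENNReal.tsum_le_tsum cauchy
      _ = (∑' α : Fin n → ℕ, ∑ j : Fin n,
            (if 1 ≤ α j then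
              (α j : ℝ≥0∞) * (‖ξ (fun i => α i - if i = j then 1 else 0)‖₊ : ℝ≥0∞) ^ 2 else 0)) *
          ∑ k : Fin n, (‖v k‖₊ : ℝ≥0∞) ^ 2 := by
        rw [ENNReal.tsum_mul_right]
        congr 1
        exact tsum_congr fun α => Finset.sum_filter _ _
      _ = (∑ j : Fin n, ∑' α : Fin n → ℕ,
            (if 1 ≤ α j then
              (α j : ℝ≥0∞) * (‖ξ (fun i => α i - if i = j then 1 else 0)‖₊ : ℝ≥0∞) ^ 2 else 0)) *
          ∑ k : Fin n, (‖v k‖₊ : ℝ≥0∞) ^ 2 := by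
        rw [Summable.tsum_finsetSum fun _ _ => ENNReal.summable]
      _ = (∑ j : Fin n, ∑' β : Fin n → ℕ, ((β j : ℝ≥0∞) + 1) * (‖ξ β‖₊ : ℝ≥0∞) ^ 2) *
          ∑ k : Fin n, (‖v k‖₊ : ℝ≥0∞) ^ 2 := by
        congr 1
        refine Finset.sum_congr rfl fun j _ => ?_
        have hinj : Function.Injective
            (fun β : Fin n → ℕ => (fun i => β i + if i = j then 1 else 0 : Fin n → ℕ)) := by
          intro β β' h
          funext i
          have := congrFun h i
          simpa using this
        rw [← Function.Injective.tsum_eq hinj ?hsupp]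
        · refine tsum_congr fun β => ?_
          have hc : (1 : ℕ) ≤ β j + if j = j then 1 else 0 := by simp
          rw [if_pos hc]
          have hβ : (fun i => (β i + if i = j then 1 else 0) - if i = j then 1 else 0) = β := by
            funext i; omega
          rw [hβ]
          push_cast
          simp
        case hsupp =>
          intro α hα
          simp only [Function.mem_support] at hα
          have h1 : 1 ≤ α j := by
            by_contra h
            exact hα (if_neg h)
          exact ⟨fun i => α i - if i = j then 1 else 0, by
            funext i
            by_cases hij : i = j <;> simp [hij] <;> omega⟩
      _ = (∑' β : Fin n → ℕ, (((∑ i, β i) + n : ℕ) : ℝ≥0∞) * (‖ξ β‖₊ : ℝ≥0∞) ^ 2) *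
          ∑ k : Fin n, (‖v k‖₊ : ℝ≥0∞) ^ 2 := by
        congr 1
        rw [← Summable.tsum_finsetSum fun _ _ => ENNReal.summable]
        refine tsum_congr fun β => ?_
        rw [← Finset.sum_mul]
        congr 1
        push_cast
        rw [Finset.sum_add_distrib]
        simp
      _ = S := by
        rw [hS, ← ENNReal.tsum_mul_right]
        refine tsum_congr fun β => ?_
        rw [Finset.mul_sum]
  refine ⟨ENNReal.tsum_le_tsum fun α => le_add_of_nonneg_left (zero_le), ?_⟩
  rw [ENNReal.tsum_add, two_mul]
  exact add_le_add_left key _
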